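/- Let F(y) = \sum_{i=1}^k w_i e^{a_i y + (1/2) b_i y^2} be a formal power series in y, where w_i, a_i, b_i are elements of a commutative Q-algebra. Define the operators D_i = \partial_y - (a_i + y b_i). Then D_k^{2^{k-1}} D_{k-1}^{2^{k-2}} \cdots D_1^{2^0} (F) = 0. -/

import Mathlib

open PowerSeries

variable {R : Type*} [CommRing R] [Algebra ℚ R]

/-- Coefficients of the formal power series `e^{a y + (1/2) b y²}` in `y`. -/
noncomputable def expCoeff (a b : R) : ℕ → R
  | 0 => 1
  | 1 => a
  | (n + 2) => algebraMap ℚ R (((n : ℚ) + 2)⁻¹) *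
      (a * expCoeff a b (n + 1) + b * expCoeff a b n)

/-- The formal power series `e^{a y + (1/2) b y²}` in `y`. -/
noncomputable def expAB (a b : R) : PowerSeries R := PowerSeries.mk (expCoeff a b)

/-- The differential operator `D = ∂_y - (a + y b)` on formal power series in `y`. -/
noncomputable def Dop (a b : R) (f : PowerSeries R) : PowerSeries R :=
  f.derivativeFun - (PowerSeries.C a + PowerSeries.X * PowerSeries.C b) * f

/-- `iterOps D n = (D_{n-1})^{2^{n-1}} ∘ ⋯ ∘ (D_1)^{2^1} ∘ (D_0)^{2^0}`
(0-indexed; this is `D_k^{2^{k-1}} ⋯ D_1^{2^0}` in 1-indexed notation). -/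
noncomputable def iterOps {M : Type*} (D : ℕ → M → M) : ℕ → M → M
  | 0 => id
  | (n + 1) => (D n)^[2 ^ n] ∘ iterOps D n

lemma expAB_deriv (a b : R) :
    derivativeFun (expAB a b) = (PowerSeries.C a + PowerSeries.X * PowerSeries.C b)
      * expAB a b := by
  ext n
  rw [show (expAB a b).derivativeFun = derivative R (expAB a b) from rfl, coeff_derivative, add_mul, map_add, coeff_C_mul, mul_assoc]
  cases n with
  | zero =>
    simp [expAB, expCoeff]
  | succ m =>
    rw [coeff_succ_X_mul, coeff_C_mul]
    simp only [expAB, coeff_mk]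
    have h1 : (((m + 1 : ℕ) : R) + 1) = algebraMap ℚ R ((m : ℚ) + 2) := by
      rw [show ((m : ℚ) + 2) = ((m + 2 : ℕ) : ℚ) by push_cast; ring, map_natCast]
      push_cast
      ring
    have h2 : ((m : ℚ) + 2) ≠ 0 := by positivity
    rw [show expCoeff a b (m + 1 + 1) = algebraMap ℚ R (((m : ℚ) + 2)⁻¹) *
        (a * expCoeff a b (m + 1) + b * expCoeff a b m) from rfl, h1, mul_comm, ← mul_assoc,
      ← map_mul, mul_inv_cancel₀ h2, map_one, one_mul]

/-- The polynomial operator corresponding to conjugating `Dop` by `expAB`. -/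
noncomputable def Tpoly (c d : R) (q : Polynomial R) : Polynomial R :=
  Polynomial.derivative q + (Polynomial.C c + Polynomial.X * Polynomial.C d) * q

lemma Dop_poly_mul (a b a' b' : R) (p : Polynomial R) :
    Dop a' b' ((p : PowerSeries R) * expAB a b) =
      ((Tpoly (a - a') (b - b') p : Polynomial R) : PowerSeries R) * expAB a b := by
  rw [Dop, derivativeFun_mul, show (p : PowerSeries R).derivativeFun = derivative R (p : PowerSeries R) from rfl,
    derivative_coe, expAB_deriv]
  simp only [Tpoly, map_sub, Polynomial.coe_sub, Polynomial.coe_add, Polynomial.coe_mul,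
    Polynomial.coe_C, Polynomial.coe_X, smul_eq_mul]
  ring

lemma Dop_iter (a b a' b' : R) (p : Polynomial R) (n : ℕ) :
    (Dop a' b')^[n] ((p : PowerSeries R) * expAB a b) =
      (((Tpoly (a - a') (b - b'))^[n] p : Polynomial R) : PowerSeries R) * expAB a b := by
  induction n generalizing p with
  | zero => rfl
  | succ n ih =>
    rw [Function.iterate_succ_apply, Dop_poly_mul, ih, Function.iterate_succ_apply]

lemma Tpoly_natDegree (c d : R) (q : Polynomial R) :
    (Tpoly c d q).natDegree ≤ q.natDegree + 1 := by
  refine le_trans (Polynomial.natDegree_add_le _ _) (max_le ?_ ?_)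
  · exact le_trans (Polynomial.natDegree_derivative_le q) (by omega)
  · refine le_trans (Polynomial.natDegree_mul_le) ?_
    have h : (Polynomial.C c + Polynomial.X * Polynomial.C d).natDegree ≤ 1 := by
      refine le_trans (Polynomial.natDegree_add_le _ _) (max_le ?_ ?_)
      · simp
      · refine le_trans (Polynomial.natDegree_mul_le) ?_
        simpa using Polynomial.natDegree_X_le
    omega

lemma Tpoly_iter_natDegree (c d : R) (p : Polynomial R) (n : ℕ) :
    ((Tpoly c d)^[n] p).natDegree ≤ p.natDegree + n := by
  induction n with
  | zero => simp
  | succ n ih =>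
    rw [Function.iterate_succ_apply']
    exact le_trans (Tpoly_natDegree c d _) (by omega)

lemma Tpoly_zero_zero (q : Polynomial R) : Tpoly (0 : R) 0 q = Polynomial.derivative q := by
  unfold Tpoly
  simp

lemma Dop_add (a b : R) (f g : PowerSeries R) :
    Dop a b (f + g) = Dop a b f + Dop a b g := by
  rw [Dop, Dop, Dop, derivativeFun_add]
  ring

/-- `Dop` as an additive monoid homomorphism. -/
noncomputable def DopHom (a b : R) : PowerSeries R →+ PowerSeries R :=
  AddMonoidHom.mk' (Dop a b) (Dop_add a b)

lemma Dop_iterate_sum (a b : R) (m : ℕ) {ι : Type*} (s : Finset ι) (f : ι → PowerSeries R) :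
    (Dop a b)^[m] (∑ i ∈ s, f i) = ∑ i ∈ s, (Dop a b)^[m] (f i) := by
  induction m with
  | zero => simp
  | succ m ih =>
    rw [Function.iterate_succ_apply', ih]
    calc Dop a b (∑ i ∈ s, (Dop a b)^[m] (f i))
        = ∑ i ∈ s, Dop a b ((Dop a b)^[m] (f i)) := map_sum (DopHom a b) _ _
      _ = _ := by simp [Function.iterate_succ_apply']

lemma main_aux (k : ℕ) (w a b : ℕ → R) :
    ∀ n, n ≤ k → ∃ p : ℕ → Polynomial R,
      (∀ i, (p i).natDegree < 2 ^ n) ∧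
      iterOps (fun i => Dop (a i) (b i)) n
          (∑ i ∈ Finset.range k, PowerSeries.C (w i) * expAB (a i) (b i)) =
        ∑ i ∈ Finset.Ico n k, ((p i : PowerSeries R) * expAB (a i) (b i)) := by
  intro n
  induction n with
  | zero =>
    intro _
    refine ⟨fun i => Polynomial.C (w i), fun i => by simp, ?_⟩
    simp only [iterOps, id_eq, Finset.range_eq_Ico, Polynomial.coe_C]
  | succ n ih =>
    intro hn
    obtain ⟨p, hdeg, hp⟩ := ih (by omega)
    refine ⟨fun i => (Tpoly (a i - a n) (b i - b n))^[2 ^ n] (p i), fun i => ?_, ?_⟩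
    · show ((Tpoly (a i - a n) (b i - b n))^[2 ^ n] (p i)).natDegree < 2 ^ (n + 1)
      have h1 := Tpoly_iter_natDegree (a i - a n) (b i - b n) (p i) (2 ^ n)
      have h2 := hdeg i
      have h3 : (2 : ℕ) ^ (n + 1) = 2 ^ n + 2 ^ n := by ring
      omega
    · show (Dop (a n) (b n))^[2 ^ n]
        (iterOps (fun i => Dop (a i) (b i)) n _) = _
      rw [hp, Dop_iterate_sum]
      have hterm : ∀ i, (Dop (a n) (b n))^[2 ^ n] ((p i : PowerSeries R) * expAB (a i) (b i)) =
          (((Tpoly (a i - a n) (b i - b n))^[2 ^ n] (p i) : Polynomial R) : PowerSeries R) *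
            expAB (a i) (b i) := fun i => Dop_iter (a i) (b i) (a n) (b n) (p i) (2 ^ n)
      simp only [hterm]
      rw [Finset.sum_eq_sum_Ico_succ_bot (by omega : n < k)]
      have hkill : (Tpoly (a n - a n) (b n - b n))^[2 ^ n] (p n) = 0 := by
        have hfun : Tpoly (a n - a n) (b n - b n) = (⇑(Polynomial.derivative (R := R))) := by
          funext q
          unfold Tpoly
          simp
        rw [hfun]
        exact Polynomial.iterate_derivative_eq_zero (hdeg n)
      rw [hkill]
      simp

/-- For `F(y) = ∑_{i=1}^k w_i e^{a_i y + (1/2) b_i y²}` over a commutative `ℚ`-algebra and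
`D_i = ∂_y - (a_i + y b_i)`, we have `D_k^{2^{k-1}} D_{k-1}^{2^{k-2}} ⋯ D_1^{2^0} (F) = 0`. -/
theorem stmt12 (k : ℕ) (w a b : ℕ → R) :
    iterOps (fun i => Dop (a i) (b i)) k
      (∑ i ∈ Finset.range k, PowerSeries.C (w i) * expAB (a i) (b i)) = 0 := by
  obtain ⟨p, _, h⟩ := main_aux k w a b k le_rfl
  rw [h]
  simp
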